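/- Let Y be a compact metric space equipped with a finite Borel measure μ with μ(Y) > 0, let Z be a metric space, and let f, g : Y → Z be Lipschitz maps. Let β > 0 and assume d_L(f_*μ, g_*μ) ≤ β. Then there exists a nonempty finite set Ỹ, a map p : Ỹ → Y, and a bijection φ : Ỹ → Ỹ such that dist(f(p(ỹ)), g(p(φ(ỹ)))) ≤ 2β for every ỹ ∈ Ỹ. -/

import Mathlib

open MeasureTheory

/-- The Lévy–Prokhorov-type distance of the paper:
`d_L(μ, ν) = inf {ε > 0 | ∀ A, ν(A_ε) ≥ μ(A)}`, where `A_ε` is the open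
`ε`-neighborhood of `A`. -/
noncomputable def levyDist {X : Type*} [PseudoMetricSpace X] [MeasurableSpace X]
    (μ ν : Measure X) : ℝ :=
  sInf {ε : ℝ | 0 < ε ∧ ∀ A : Set X, μ A ≤ ν (Metric.thickening ε A)}

/-- Measured Marriage Theorem 14.2.2 (first part): given Lipschitz maps
`f, g : Y → Z` with `d_L(f_*μ, g_*μ) ≤ β`, there is a nonempty finite set `Ỹ`
(realized as `Fin m`, `m > 0`), a map `p : Ỹ → Y` and a bijection `φ` of `Ỹ`
with `dist (f (p ỹ)) (g (p (φ ỹ))) ≤ 2β` for all `ỹ`. -/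
theorem stmt9 {Y Z : Type*} [MetricSpace Y] [CompactSpace Y]
    [MeasurableSpace Y] [BorelSpace Y]
    [MetricSpace Z] [MeasurableSpace Z] [BorelSpace Z]
    (μ : Measure Y) [IsFiniteMeasure μ] (hμ : 0 < μ Set.univ)
    (f g : Y → Z) {Kf Kg : NNReal} (hf : LipschitzWith Kf f) (hg : LipschitzWith Kg g)
    {β : ℝ} (hβ : 0 < β) (hd : levyDist (μ.map f) (μ.map g) ≤ β) :
    ∃ m : ℕ, 0 < m ∧ ∃ (p : Fin m → Y) (φ : Equiv.Perm (Fin m)),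
      ∀ i, dist (f (p i)) (g (p (φ i))) ≤ 2 * β := by
  classical
  have hfc : Continuous f := hf.continuous
  have hgc : Continuous g := hg.continuous
  have hfm : Measurable f := hfc.measurable
  have hgm : Measurable g := hgc.measurable
  have hYne : Nonempty Y := by
    rcases isEmpty_or_nonempty Y with h | h
    · rw [Set.univ_eq_empty_iff.mpr h, measure_empty] at hμ; exact absurd hμ (lt_irrefl 0)
    · exact h
  -- the defining set of the Lévy distance is nonempty
  have hSne : ({ε : ℝ | 0 < ε ∧ ∀ A : Set Z,
      (μ.map f) A ≤ (μ.map g) (Metric.thickening ε A)}).Nonempty := by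
    have hK : IsCompact (Set.range f ∪ Set.range g) :=
      (isCompact_range hfc).union (isCompact_range hgc)
    obtain ⟨C, hC⟩ := Metric.isBounded_iff.mp hK.isBounded
    refine ⟨max C 0 + 1, by positivity, ?_⟩
    intro A
    by_cases hA : (A ∩ Set.range f).Nonempty
    · obtain ⟨z, hzA, hzr⟩ := hA
      have hsub : Set.univ ⊆ g ⁻¹' Metric.thickening (max C 0 + 1) A := by
        intro y _
        refine Metric.mem_thickening_iff.mpr ⟨z, hzA, ?_⟩
        have h1 : dist (g y) z ≤ C :=
          hC (Set.mem_union_right _ ⟨y, rfl⟩) (Set.mem_union_left _ hzr)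
        have h2 : C ≤ max C 0 := le_max_left _ _
        linarith
      have h1 : (μ.map g) (Metric.thickening (max C 0 + 1) A) = μ Set.univ := by
        rw [Measure.map_apply hgm Metric.isOpen_thickening.measurableSet]
        exact le_antisymm (measure_mono (Set.subset_univ _))
          (measure_mono hsub)
      have h2 : (μ.map f) A ≤ μ Set.univ := by
        have := measure_mono (μ := μ.map f) (Set.subset_univ A)
        rwa [Measure.map_apply hfm MeasurableSet.univ, Set.preimage_univ] at this
      rw [h1]; exact h2
    · have hsub : A ⊆ (Set.range f)ᶜ := by
        intro z hz hzr
        exact hA ⟨z, hz, hzr⟩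
      have h0 : (μ.map f) A = 0 := by
        have h1 : (μ.map f) ((Set.range f)ᶜ) = 0 := by
          rw [Measure.map_apply hfm (isCompact_range hfc).isClosed.measurableSet.compl]
          simp
        exact le_antisymm ((measure_mono hsub).trans h1.le) zero_le
      rw [h0]; exact zero_le
  -- extract a good ε
  have hlt : sInf {ε : ℝ | 0 < ε ∧ ∀ A : Set Z,
      (μ.map f) A ≤ (μ.map g) (Metric.thickening ε A)} < β + β / 2 := by
    have : levyDist (μ.map f) (μ.map g) < β + β / 2 := lt_of_le_of_lt hd (by linarith)
    rwa [levyDist] at this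
  obtain ⟨ε, hεS, hεlt⟩ := exists_lt_of_csInf_lt hSne hlt
  obtain ⟨hε0, hεA⟩ := hεS
  -- chain sets
  set step : Set Y → Set Y := fun s => g ⁻¹' Metric.thickening ε (f '' s) with hstep
  have hApos : ∀ n, 0 < μ (step^[n] Set.univ) := by
    intro n
    induction n with
    | zero => simpa using hμ
    | succ n ih =>
      rw [Function.iterate_succ_apply']
      have h2 : μ (step^[n] Set.univ) ≤ (μ.map f) (f '' step^[n] Set.univ) :=
        Measure.le_map_apply_image hfm.aemeasurable _
      have h1 : (μ.map f) (f '' step^[n] Set.univ) ≤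
          (μ.map g) (Metric.thickening ε (f '' step^[n] Set.univ)) := hεA _
      have h3 : (μ.map g) (Metric.thickening ε (f '' step^[n] Set.univ)) =
          μ (step (step^[n] Set.univ)) :=
        Measure.map_apply hgm Metric.isOpen_thickening.measurableSet
      calc (0 : ENNReal) < μ (step^[n] Set.univ) := ih
        _ ≤ _ := (h2.trans h1).trans h3.le
  -- chains
  have hchain : ∀ n, ∀ y ∈ step^[n] Set.univ, ∃ c : ℕ → Y, c n = y ∧
      ∀ j < n, dist (f (c j)) (g (c (j + 1))) < ε := by
    intro n
    induction n with
    | zero => intro y _; exact ⟨fun _ => y, rfl, fun j hj => absurd hj (Nat.not_lt_zero j)⟩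
    | succ n ih =>
      intro y hy
      rw [Function.iterate_succ_apply'] at hy
      obtain ⟨z, hz, hdz⟩ := Metric.mem_thickening_iff.mp hy
      obtain ⟨x, hx, rfl⟩ := hz
      obtain ⟨c, hcn, hedge⟩ := ih x hx
      refine ⟨Function.update c (n + 1) y, Function.update_self _ _ _, ?_⟩
      intro j hj
      rcases Nat.lt_or_ge j n with hjn | hjn
      · rw [Function.update_of_ne (by omega) _ _, Function.update_of_ne (by omega) _ _]
        exact hedge j hjn
      · have hjeq : j = n := by omega
        subst hjeq
        rw [Function.update_of_ne (by omega) _ _, Function.update_self _ _ _, hcn]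
        rwa [dist_comm] at hdz
  -- finite cover by small balls
  have hKg1 : (0 : ℝ) < (Kg : ℝ) + 1 := by positivity
  set r : ℝ := β / (4 * ((Kg : ℝ) + 1)) with hrdef
  have hr : 0 < r := by positivity
  obtain ⟨t, ht⟩ := isCompact_univ.elim_finite_subcover (fun y : Y => Metric.ball y r)
    (fun _ => Metric.isOpen_ball) (fun y _ => Set.mem_iUnion.mpr ⟨y, Metric.mem_ball_self hr⟩)
  set N := t.card with hN
  obtain ⟨y, hy⟩ := nonempty_of_measure_ne_zero (hApos N).ne'
  obtain ⟨c, hcN, hedge⟩ := hchain N y hy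
  -- pigeonhole
  have hcen : ∀ k : Fin (N + 1), ∃ x, x ∈ t ∧ c k ∈ Metric.ball x r := by
    intro k
    have := ht (Set.mem_univ (c k))
    simpa using this
  choose σ hσt hσball using hcen
  obtain ⟨i, j, hij, hmapeq⟩ := Fintype.exists_ne_map_eq_of_card_lt
    (fun k : Fin (N + 1) => (⟨σ k, hσt k⟩ : {x // x ∈ t}))
    (by simp only [Fintype.card_coe, Fintype.card_fin]; omega)
  have hσeq : σ i = σ j := congrArg Subtype.val hmapeq
  have hclose : dist (c i) (c j) < 2 * r := by
    have h1 := hσball i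
    have h2 := hσball j
    rw [Metric.mem_ball] at h1 h2
    have := dist_triangle (c i) (σ i) (c j)
    rw [hσeq] at this
    rw [dist_comm] at h2
    rw [hσeq] at h1
    linarith [dist_comm (σ j) (c j) ▸ h2]
  obtain ⟨a, b, hab, hbN, hdab⟩ : ∃ a b : ℕ, a < b ∧ b ≤ N ∧ dist (c a) (c b) < 2 * r := by
    rcases lt_or_gt_of_ne (fun h : (i : ℕ) = (j : ℕ) => hij (Fin.ext h)) with h | h
    · exact ⟨i, j, h, Nat.lt_succ_iff.mp j.isLt, hclose⟩
    · exact ⟨j, i, h, Nat.lt_succ_iff.mp i.isLt, by rwa [dist_comm]⟩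
  obtain ⟨m', hm'⟩ : ∃ m', b = a + m' + 1 := ⟨b - a - 1, by omega⟩
  refine ⟨m' + 1, Nat.succ_pos _, fun k => c (a + (k : ℕ)), finRotate (m' + 1), ?_⟩
  intro k
  rw [finRotate_succ_apply]
  by_cases hk : k = Fin.last m'
  · subst hk
    rw [Fin.last_add_one]
    simp only [Fin.val_zero, Fin.val_last, Nat.add_zero]
    have hedge1 : dist (f (c (a + m'))) (g (c (a + m' + 1))) < ε :=
      hedge (a + m') (by omega)
    have hlip : dist (g (c (a + m' + 1))) (g (c a)) ≤ (Kg : ℝ) * (2 * r) := by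
      have := hg.dist_le_mul (c (a + m' + 1)) (c a)
      have hd2 : dist (c (a + m' + 1)) (c a) ≤ 2 * r := by
        rw [dist_comm, ← hm']; exact hdab.le
      calc dist (g (c (a + m' + 1))) (g (c a)) ≤ (Kg : ℝ) * dist (c (a + m' + 1)) (c a) := this
        _ ≤ (Kg : ℝ) * (2 * r) := by
            exact mul_le_mul_of_nonneg_left hd2 (NNReal.coe_nonneg Kg)
    have hKgr : (Kg : ℝ) * (2 * r) ≤ β / 2 := by
      have heq : (Kg : ℝ) * (2 * r) = ((Kg : ℝ) / ((Kg : ℝ) + 1)) * (β / 2) := by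
        rw [hrdef]; field_simp; ring
      rw [heq]
      have h1 : (Kg : ℝ) / ((Kg : ℝ) + 1) ≤ 1 := (div_le_one hKg1).mpr (by linarith)
      exact mul_le_of_le_one_left (by linarith) h1
    calc dist (f (c (a + m'))) (g (c a))
        ≤ dist (f (c (a + m'))) (g (c (a + m' + 1))) + dist (g (c (a + m' + 1))) (g (c a)) :=
          dist_triangle _ _ _
      _ ≤ ε + β / 2 := by linarith
      _ ≤ 2 * β := by linarith
  · have hkval : ((k + 1 : Fin (m' + 1)) : ℕ) = (k : ℕ) + 1 := by
      rw [Fin.val_add_one]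
      simp [hk]
    show dist (f (c (a + (k : ℕ)))) (g (c (a + ((k + 1 : Fin (m' + 1)) : ℕ)))) ≤ 2 * β
    rw [hkval]
    have hklt : (k : ℕ) < m' := by
      have := k.isLt
      rcases Nat.lt_or_ge (k : ℕ) m' with h | h
      · exact h
      · exact absurd (Fin.ext (by omega : (k : ℕ) = m')) hk
    have : dist (f (c (a + (k : ℕ)))) (g (c (a + (k : ℕ) + 1))) < ε :=
      hedge (a + (k : ℕ)) (by omega)
    have heq : a + ((k : ℕ) + 1) = a + (k : ℕ) + 1 := by omega
    rw [heq]
    linarith
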